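/- A finitely generated integral commutative monoid P is valuative (i.e., its image in P^gp satisfies: for all x ∈ P^gp, x ∈ P or x⁻¹ ∈ P) if and only if the quotient P/P^× is valuative; and for a fine saturated monoid P, P is valuative if and only if the rank of the finitely generated abelian group P^gp/P^× is at most 1. -/

import Mathlib

-- representation lemma
lemma aux_repr {M : Type*} [CommMonoid M] (S : Finset M) {q : M}
    (hq : q ∈ Submonoid.closure (S : Set M)) :
    ∃ f : {x // x ∈ S} →₀ ℕ, f.prod (fun s n => (s : M) ^ n) = q := by
  induction hq using Submonoid.closure_induction with
  | mem x hx => exact ⟨Finsupp.single ⟨x, hx⟩ 1, by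
      rw [Finsupp.prod_single_index] <;> simp⟩
  | one => exact ⟨0, by simp⟩
  | mul x y hx hy ihx ihy =>
      obtain ⟨f, hf⟩ := ihx; obtain ⟨g, hg⟩ := ihy
      exact ⟨f + g, by
        rw [Finsupp.prod_add_index' (fun a => pow_zero _) (fun a b c => pow_add _ _ _), hf, hg]⟩

-- minimum of a finite set under the total divisibility preorder
lemma aux_min {M : Type*} [CommGroup M] (Q : Submonoid M)
    (hval : ∀ x : M, x ∈ Q ∨ x⁻¹ ∈ Q) (S' : Finset M) (h : S'.Nonempty) :
    ∃ a ∈ S', ∀ s ∈ S', s * a⁻¹ ∈ Q := by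
  classical
  revert h
  induction S' using Finset.induction with
  | empty => intro h; exact absurd h (by simp)
  | @insert t s hts ih =>
      intro _
      rcases s.eq_empty_or_nonempty with rfl | hs
      · exact ⟨t, by simp, fun s hs => by simp at hs; subst hs; simpa using Q.one_mem⟩
      · obtain ⟨a, ha, hmin⟩ := ih hs
        rcases hval (t * a⁻¹) with hta | hat
        · exact ⟨a, Finset.mem_insert_of_mem ha, by
            intro u hu
            rcases Finset.mem_insert.mp hu with rfl | hu
            · exact hta
            · exact hmin u hu⟩
        · refine ⟨t, Finset.mem_insert_self _ _, ?_⟩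
          intro u hu
          rcases Finset.mem_insert.mp hu with rfl | hu
          · simpa using Q.one_mem
          · have h1 := hmin u hu
            have h2 : (u * a⁻¹) * ((t * a⁻¹)⁻¹) ∈ Q := Q.mul_mem h1 hat
            convert h2 using 1
            simp [mul_inv_rev, mul_comm, mul_left_comm, mul_assoc]

-- decomposition x = p * q⁻¹
lemma aux_decomp {M : Type*} [CommGroup M] (P : Submonoid M)
    (hgen : Subgroup.closure (P : Set M) = ⊤) (x : M) :
    ∃ p ∈ P, ∃ q ∈ P, x = p * q⁻¹ := by
  let S : Subgroup M :=
    { carrier := {x | ∃ p ∈ P, ∃ q ∈ P, x = p * q⁻¹}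
      one_mem' := ⟨1, P.one_mem, 1, P.one_mem, by simp⟩
      mul_mem' := by
        rintro a b ⟨p1, hp1, q1, hq1, rfl⟩ ⟨p2, hp2, q2, hq2, rfl⟩
        exact ⟨p1 * p2, P.mul_mem hp1 hp2, q1 * q2, P.mul_mem hq1 hq2, by
          simp [mul_inv_rev, mul_comm, mul_left_comm, mul_assoc]⟩
      inv_mem' := by
        rintro a ⟨p, hp, q, hq, rfl⟩
        exact ⟨q, hq, p, hp, by simp [mul_comm]⟩ }
  have hPS : Subgroup.closure (P : Set M) ≤ S :=
    Subgroup.closure_le S |>.mpr (fun p hp => ⟨p, hp, 1, P.one_mem, by simp⟩)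
  exact hPS (hgen ▸ Subgroup.mem_top x)

section
variable {M : Type*} [CommGroup M]

lemma aux_same (P : Submonoid M) (U : Subgroup M)
    (hU : ∀ x : M, x ∈ U ↔ x ∈ P ∧ x⁻¹ ∈ P)
    (hsat : ∀ (x : M) (n : ℕ), 1 ≤ n → x ^ n ∈ P → x ∈ P) (p q : M) (hp : p ∈ P) (a b : ℕ) (hb : 1 ≤ b)
    (hu : p ^ a * q ^ b ∈ U) : p * q⁻¹ ∈ P := by
  have h1 : (p ^ a * q ^ b)⁻¹ ∈ P := ((hU _).mp hu).2
  have h2 : (q⁻¹) ^ b ∈ P := by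
    have : (q⁻¹) ^ b = p ^ a * (p ^ a * q ^ b)⁻¹ := by
      simp [mul_inv_rev, inv_pow, mul_comm, mul_left_comm, mul_assoc]
    rw [this]
    exact P.mul_mem (P.pow_mem hp a) h1
  exact P.mul_mem hp (hsat q⁻¹ b hb h2)

lemma aux_mixed (P : Submonoid M) (U : Subgroup M)
    (hU : ∀ x : M, x ∈ U ↔ x ∈ P ∧ x⁻¹ ∈ P)
    (hsat : ∀ (x : M) (n : ℕ), 1 ≤ n → x ^ n ∈ P → x ∈ P) (p q : M) (hp : p ∈ P) (hq : q ∈ P) (a b : ℕ)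
    (ha : 1 ≤ a) (hb : 1 ≤ b) (hu : p ^ a * (q ^ b)⁻¹ ∈ U) :
    p * q⁻¹ ∈ P ∨ (p * q⁻¹)⁻¹ ∈ P := by
  have hu1 : p ^ a * (q ^ b)⁻¹ ∈ P := ((hU _).mp hu).1
  have hu2 : (p ^ a * (q ^ b)⁻¹)⁻¹ ∈ P := ((hU _).mp hu).2
  rcases le_total a b with hab | hba
  · left
    have key : (p * q⁻¹) ^ b = p ^ (b - a) * (p ^ a * (q ^ b)⁻¹) := by
      rw [mul_pow, ← mul_assoc, ← pow_add, Nat.sub_add_cancel hab, inv_pow]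
    exact hsat _ b hb (key ▸ P.mul_mem (P.pow_mem hp _) hu1)
  · right
    have key : ((p * q⁻¹)⁻¹) ^ a = q ^ (a - b) * (p ^ a * (q ^ b)⁻¹)⁻¹ := by
      rw [mul_inv_rev (p ^ a), inv_inv, mul_inv_rev, inv_inv, mul_pow, inv_pow,
        ← mul_assoc, ← pow_add, Nat.sub_add_cancel hba]
    exact hsat _ a ha (key ▸ P.mul_mem (P.pow_mem hq _) hu2)

lemma aux_rel (P : Submonoid M) (U : Subgroup M)
    (hU : ∀ x : M, x ∈ U ↔ x ∈ P ∧ x⁻¹ ∈ P)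
    (hsat : ∀ (x : M) (n : ℕ), 1 ≤ n → x ^ n ∈ P → x ∈ P) (p q : M) (hp : p ∈ P) (hq : q ∈ P) (m n : ℤ)
    (hmn : m ≠ 0 ∨ n ≠ 0) (hu : p ^ m * q ^ n ∈ U) :
    p * q⁻¹ ∈ P ∨ (p * q⁻¹)⁻¹ ∈ P := by
  have hswap : (p * q⁻¹)⁻¹ = q * p⁻¹ := by group
  have hposm : ∀ (k : ℤ), 0 ≤ k → ∀ x : M, x ^ k = x ^ k.toNat := by
    intro k hk x
    rw [← zpow_natCast, Int.toNat_of_nonneg hk]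
  have hnegm : ∀ (k : ℤ), k < 0 → ∀ x : M, x ^ k = (x ^ (-k).toNat)⁻¹ := by
    intro k hk x
    rw [← zpow_natCast, Int.toNat_of_nonneg (by omega : (0:ℤ) ≤ -k), zpow_neg, inv_inv]
  rcases lt_trichotomy m 0 with hm | hm | hm
  · rcases lt_trichotomy n 0 with hn | hn | hn
    · -- m<0, n<0 : inverse, same-sign, b = (-n).toNat ≥ 1
      left
      have hu' : p ^ (-m).toNat * q ^ (-n).toNat ∈ U := by
        have : (p ^ m * q ^ n)⁻¹ ∈ U := U.inv_mem hu
        rw [mul_inv_rev, hnegm m hm, hnegm n hn, inv_inv, inv_inv, mul_comm] at this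
        exact this
      exact aux_same P U hU hsat p q hp (-m).toNat (-n).toNat (by omega) hu'
    · -- m<0, n=0 : p^(-m) ∈ U, gives p⁻¹ ∈ P
      right
      rw [hswap]
      subst hn
      have hu' : (p ^ (-m).toNat)⁻¹ ∈ U := by
        have := hu
        rw [hnegm m hm, zpow_zero, mul_one] at this
        exact this
      have : (p⁻¹) ^ (-m).toNat ∈ P := by
        rw [inv_pow]; exact ((hU _).mp hu').1
      exact P.mul_mem hq (hsat p⁻¹ (-m).toNat (by omega) this)
    · -- m<0, n>0 : mixed on inverse
      have hu' : p ^ (-m).toNat * (q ^ n.toNat)⁻¹ ∈ U := by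
        have : (p ^ m * q ^ n)⁻¹ ∈ U := U.inv_mem hu
        rw [mul_inv_rev, hnegm m hm, hposm n (le_of_lt hn), inv_inv, mul_comm] at this
        exact this
      exact aux_mixed P U hU hsat p q hp hq _ _ (by omega) (by omega) hu'
  · subst hm
    rcases hmn with h | h
    · exact absurd rfl h
    rcases lt_trichotomy n 0 with hn | hn | hn
    ·
      left
      have hu' : p ^ (0 : ℕ) * q ^ (-n).toNat ∈ U := by
        have : (p ^ (0:ℤ) * q ^ n)⁻¹ ∈ U := U.inv_mem hu
        rw [mul_inv_rev, hnegm n hn, inv_inv, zpow_zero] at this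
        simpa [mul_comm] using this
      exact aux_same P U hU hsat p q hp 0 (-n).toNat (by omega) hu'
    · exact absurd hn h
    · left
      have hu' : p ^ (0 : ℕ) * q ^ n.toNat ∈ U := by
        have := hu
        rw [hposm n (le_of_lt hn), zpow_zero] at this
        simpa using this
      exact aux_same P U hU hsat p q hp 0 n.toNat (by omega) hu'
  · rcases lt_trichotomy n 0 with hn | hn | hn
    · -- m>0, n<0 : mixed
      have hu' : p ^ m.toNat * (q ^ (-n).toNat)⁻¹ ∈ U := by
        have := hu
        rw [hposm m (le_of_lt hm), hnegm n hn] at this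
        exact this
      exact aux_mixed P U hU hsat p q hp hq _ _ (by omega) (by omega) hu'
    · -- m>0, n=0 : p^m ∈ U gives p⁻¹ ∈ P
      right
      rw [hswap]
      subst hn
      have hu' : p ^ m.toNat ∈ U := by
        have := hu
        rw [hposm m (le_of_lt hm), zpow_zero, mul_one] at this
        exact this
      have : (p⁻¹) ^ m.toNat ∈ P := by
        rw [inv_pow]; exact ((hU _).mp hu').2
      exact P.mul_mem hq (hsat p⁻¹ m.toNat (by omega) this)
    · -- m>0, n>0 : same sign
      left
      have hu' : p ^ m.toNat * q ^ n.toNat ∈ U := by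
        have := hu
        rw [hposm m (le_of_lt hm), hposm n (le_of_lt hn)] at this
        exact this
      exact aux_same P U hU hsat p q hp m.toNat n.toNat (by omega) hu'
end

section
variable {M : Type*} [CommGroup M]

lemma aux_nontrivial (S : Finset M) {q : M} (hq : q ∈ Submonoid.closure (S : Set M))
    (hq1 : q ≠ 1) : ∃ s ∈ S, s ≠ 1 := by
  by_contra h
  push_neg at h
  have : Submonoid.closure (S : Set M) ≤ ⊥ := by
    rw [Submonoid.closure_le]
    intro s hs
    simp [h s hs]
  exact hq1 (Submonoid.mem_bot.mp (this hq))

lemma aux_div (Q : Submonoid M) (S : Finset M) (hSQ : Submonoid.closure (S : Set M) = Q)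
    (a : M) (hmin : ∀ s ∈ S, s ≠ 1 → s * a⁻¹ ∈ Q) :
    ∀ q ∈ Q, q = 1 ∨ q * a⁻¹ ∈ Q := by
  intro q hq
  rw [← hSQ] at hq
  induction hq using Submonoid.closure_induction with
  | mem s hs =>
      by_cases hs1 : s = 1
      · exact Or.inl hs1
      · exact Or.inr (hmin s hs hs1)
  | one => exact Or.inl rfl
  | mul x y hx hy ihx ihy =>
      have hxQ : x ∈ Q := hSQ ▸ hx
      have hyQ : y ∈ Q := hSQ ▸ hy
      rcases ihx with rfl | hxa
      · rcases ihy with rfl | hya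
        · exact Or.inl (one_mul 1)
        · exact Or.inr (by rwa [one_mul])
      · refine Or.inr ?_
        have : (x * a⁻¹) * y ∈ Q := Q.mul_mem hxa hyQ
        convert this using 1
        simp [mul_comm, mul_left_comm, mul_assoc]

-- the representation lemma from before, needed here
lemma aux_repr' (S : Finset M) {q : M}
    (hq : q ∈ Submonoid.closure (S : Set M)) :
    ∃ f : {x // x ∈ S} →₀ ℕ, f.prod (fun s n => (s : M) ^ n) = q := by
  induction hq using Submonoid.closure_induction with
  | mem x hx => exact ⟨Finsupp.single ⟨x, hx⟩ 1, by
      rw [Finsupp.prod_single_index] <;> simp⟩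
  | one => exact ⟨0, by simp⟩
  | mul x y hx hy ihx ihy =>
      obtain ⟨f, hf⟩ := ihx; obtain ⟨g, hg⟩ := ihy
      exact ⟨f + g, by
        rw [Finsupp.prod_add_index' (fun a => pow_zero _) (fun a b c => pow_add _ _ _), hf, hg]⟩

lemma aux_arch (Q : Submonoid M) (S : Finset M) (hSQ : Submonoid.closure (S : Set M) = Q)
    (hval : ∀ x : M, x ∈ Q ∨ x⁻¹ ∈ Q) (hsharp : ∀ w : M, w ∈ Q → w⁻¹ ∈ Q → w = 1)
    (a : M) (haQ : a ∈ Q) (ha1 : a ≠ 1) (d : M) : ∃ N : ℕ, a ^ N * d⁻¹ ∈ Q := by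
  by_contra h
  push_neg at h
  have hrep : ∀ N : ℕ, ∃ f : {x // x ∈ S} →₀ ℕ,
      f.prod (fun s n => (s : M) ^ n) = d * (a ^ N)⁻¹ := by
    intro N
    have h1 : (a ^ N * d⁻¹)⁻¹ ∈ Q := (hval (a ^ N * d⁻¹)).resolve_left (h N)
    rw [mul_inv_rev, inv_inv] at h1
    exact aux_repr' S (hSQ ▸ h1)
  choose f hf using hrep
  obtain ⟨M0, N0, hMN, hle⟩ :=
    (Set.isPWO_of_wellQuasiOrderedLE (Set.univ : Set ({x // x ∈ S} →₀ ℕ))).exists_lt (f := f) (fun n => Set.mem_univ _)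
  set g := f N0 - f M0 with hg
  have hadd : f M0 + g = f N0 := add_tsub_cancel_of_le hle
  have hsQ : ∀ s : {x // x ∈ S}, (s : M) ∈ Q := fun s => hSQ ▸ Submonoid.subset_closure s.2
  have hprodg : g.prod (fun s n => (s : M) ^ n) ∈ Q :=
    Submonoid.prod_mem Q (fun s _ => Q.pow_mem (hsQ s) _)
  have hsplit : d * (a ^ N0)⁻¹ = (d * (a ^ M0)⁻¹) * g.prod (fun s n => (s : M) ^ n) := by
    rw [← hf N0, ← hf M0, ← hadd,
      Finsupp.prod_add_index' (fun a => pow_zero _) (fun a b c => pow_add _ _ _)]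
  have hX : g.prod (fun s n => (s : M) ^ n) = (a ^ (N0 - M0))⁻¹ := by
    have h1 : g.prod (fun s n => (s : M) ^ n) = (d * (a ^ M0)⁻¹)⁻¹ * (d * (a ^ N0)⁻¹) := by
      rw [hsplit, inv_mul_cancel_left]
    have hpow : a ^ N0 = a ^ (N0 - M0) * a ^ M0 := by
      rw [← pow_add, Nat.sub_add_cancel hMN.le]
    rw [h1, hpow]
    group
  have h2 : (a ^ (N0 - M0))⁻¹ ∈ Q := hX ▸ hprodg
  have h3 : a ^ (N0 - M0) = 1 := hsharp _ (Q.pow_mem haQ _) h2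
  have hk1 : 1 ≤ N0 - M0 := by omega
  have h4 : a * a ^ (N0 - M0 - 1) = 1 := by
    rw [← pow_succ']
    rw [Nat.sub_add_cancel hk1] at *
    exact h3
  have h5 : a⁻¹ ∈ Q := by
    have : a ^ (N0 - M0 - 1) = a⁻¹ := eq_inv_of_mul_eq_one_left (by rwa [mul_comm])
    exact this ▸ Q.pow_mem haQ _
  exact ha1 (hsharp a haQ h5)

lemma aux_pow (Q : Submonoid M) (S : Finset M) (hSQ : Submonoid.closure (S : Set M) = Q)
    (hval : ∀ x : M, x ∈ Q ∨ x⁻¹ ∈ Q) (hsharp : ∀ w : M, w ∈ Q → w⁻¹ ∈ Q → w = 1)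
    (a : M) (haQ : a ∈ Q) (ha1 : a ≠ 1)
    (hdiv : ∀ q ∈ Q, q = 1 ∨ q * a⁻¹ ∈ Q) :
    ∀ q ∈ Q, ∃ k : ℕ, q = a ^ k := by
  have main : ∀ N : ℕ, ∀ q ∈ Q, a ^ N * q⁻¹ ∈ Q → ∃ k : ℕ, q = a ^ k := by
    intro N
    induction N with
    | zero =>
        intro q hq hq'
        rw [pow_zero, one_mul] at hq'
        exact ⟨0, by rw [pow_zero]; exact hsharp q hq hq'⟩
    | succ N ih =>
        intro q hq hq'
        rcases hdiv q hq with rfl | hqa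
        · exact ⟨0, (pow_zero a).symm⟩
        · have heq : a ^ N * (q * a⁻¹)⁻¹ = a ^ (N + 1) * q⁻¹ := by
            rw [pow_succ]
            group
          obtain ⟨k, hk⟩ := ih (q * a⁻¹) hqa (heq ▸ hq')
          refine ⟨k + 1, ?_⟩
          have : q = (q * a⁻¹) * a := by group
          rw [this, hk, pow_succ]
  intro q hq
  obtain ⟨N, hN⟩ := aux_arch Q S hSQ hval hsharp a haQ ha1 q
  exact main N q hq hN
end

section
variable {M : Type*} [CommGroup M]

lemma aux_part1 (P : Submonoid M) (U : Subgroup M)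
    (hU : ∀ x : M, x ∈ U ↔ x ∈ P ∧ x⁻¹ ∈ P) :
    (∀ x : M, x ∈ P ∨ x⁻¹ ∈ P) ↔
      (∀ y : M ⧸ U, y ∈ P.map (QuotientGroup.mk' U) ∨
        y⁻¹ ∈ P.map (QuotientGroup.mk' U)) := by
  constructor
  · intro h y
    obtain ⟨x, rfl⟩ := QuotientGroup.mk'_surjective U y
    rcases h x with hx | hx
    · exact Or.inl ⟨x, hx, rfl⟩
    · exact Or.inr ⟨x⁻¹, hx, map_inv _ _⟩
  · intro h x
    rcases h (QuotientGroup.mk' U x) with ⟨p, hp, hpx⟩ | ⟨p, hp, hpx⟩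
    · left
      have hu : p⁻¹ * x ∈ U := by
        rw [QuotientGroup.mk'_apply, QuotientGroup.mk'_apply] at hpx
        exact QuotientGroup.eq.mp hpx
      have : x = p * (p⁻¹ * x) := by group
      rw [this]
      exact P.mul_mem hp ((hU _).mp hu).1
    · right
      have hpx' : (QuotientGroup.mk' U) p = (QuotientGroup.mk' U) x⁻¹ := by
        rw [map_inv]
        exact hpx
      have hu : p⁻¹ * x⁻¹ ∈ U := by
        rw [QuotientGroup.mk'_apply, QuotientGroup.mk'_apply] at hpx'
        exact QuotientGroup.eq.mp hpx'
      have : x⁻¹ = p * (p⁻¹ * x⁻¹) := by group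
      rw [this]
      exact P.mul_mem hp ((hU _).mp hu).1

lemma aux_sharp (P : Submonoid M) (U : Subgroup M)
    (hU : ∀ x : M, x ∈ U ↔ x ∈ P ∧ x⁻¹ ∈ P) :
    ∀ w : M ⧸ U, w ∈ P.map (QuotientGroup.mk' U) →
      w⁻¹ ∈ P.map (QuotientGroup.mk' U) → w = 1 := by
  rintro w ⟨p, hp, rfl⟩ ⟨p', hp', hp'w⟩
  have h1 : (QuotientGroup.mk' U) (p * p') = 1 := by
    rw [map_mul, hp'w]
    group
  have h2 : p * p' ∈ U := by
    rw [QuotientGroup.mk'_apply] at h1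
    exact (QuotientGroup.eq_one_iff _).mp h1
  have h3 : p⁻¹ ∈ P := by
    have : p⁻¹ = p' * (p * p')⁻¹ := by group
    rw [this]
    exact P.mul_mem hp' ((hU _).mp h2).2
  have h4 : p ∈ U := (hU p).mpr ⟨hp, h3⟩
  rw [QuotientGroup.mk'_apply]
  exact (QuotientGroup.eq_one_iff _).mpr h4
end


/-- A finitely generated integral monoid `P` (realized inside its groupification
`G = P^gp`) is valuative iff its sharpening `P/P^×` (inside `G/P^×`) is valuative; and a
fine saturated monoid `P` is valuative iff the finitely generated abelian group
`P^gp/P^×` has rank at most 1 (any two elements satisfy a nontrivial relation). -/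
theorem stmt_11 {G : Type u} [CommGroup G] (P : Submonoid G)
    (hgen : Subgroup.closure (P : Set G) = ⊤) (hfg : P.FG)
    (U : Subgroup G) (hU : ∀ x : G, x ∈ U ↔ x ∈ P ∧ x⁻¹ ∈ P) :
    ((∀ x : G, x ∈ P ∨ x⁻¹ ∈ P) ↔
      (∀ y : G ⧸ U, y ∈ P.map (QuotientGroup.mk' U) ∨ y⁻¹ ∈ P.map (QuotientGroup.mk' U))) ∧
    ((∀ (x : G) (n : ℕ), 1 ≤ n → x ^ n ∈ P → x ∈ P) →
      ((∀ x : G, x ∈ P ∨ x⁻¹ ∈ P) ↔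
        (∀ y z : G ⧸ U, ∃ m n : ℤ, (m ≠ 0 ∨ n ≠ 0) ∧ y ^ m * z ^ n = 1))) := by
  classical
  refine ⟨aux_part1 P U hU, ?_⟩
  intro hsat
  constructor
  · -- valuative → rank at most 1
    intro hval
    set Q := P.map (QuotientGroup.mk' U) with hQdef
    have hvalQ : ∀ y : G ⧸ U, y ∈ Q ∨ y⁻¹ ∈ Q := (aux_part1 P U hU).mp hval
    have hsharp : ∀ w : G ⧸ U, w ∈ Q → w⁻¹ ∈ Q → w = 1 := aux_sharp P U hU
    obtain ⟨S, hSQ⟩ := hfg.map (QuotientGroup.mk' U)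
    rw [← hQdef] at hSQ
    suffices key : ∀ y z : G ⧸ U, y ∈ Q → z ∈ Q →
        ∃ m n : ℤ, (m ≠ 0 ∨ n ≠ 0) ∧ y ^ m * z ^ n = 1 by
      intro y z
      rcases hvalQ y with hy | hy <;> rcases hvalQ z with hz | hz
      · exact key y z hy hz
      · obtain ⟨m, n, h0, h1⟩ := key y z⁻¹ hy hz
        exact ⟨m, -n, Or.imp id (fun h => neg_ne_zero.mpr h) h0, by simpa using h1⟩
      · obtain ⟨m, n, h0, h1⟩ := key y⁻¹ z hy hz
        exact ⟨-m, n, Or.imp (fun h => neg_ne_zero.mpr h) id h0, by simpa using h1⟩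
      · obtain ⟨m, n, h0, h1⟩ := key y⁻¹ z⁻¹ hy hz
        exact ⟨-m, -n,
          Or.imp (fun h => neg_ne_zero.mpr h) (fun h => neg_ne_zero.mpr h) h0,
          by simpa using h1⟩
    intro y z hy hz
    by_cases hy1 : y = 1
    · exact ⟨1, 0, Or.inl one_ne_zero, by simp [hy1]⟩
    by_cases hz1 : z = 1
    · exact ⟨0, 1, Or.inr one_ne_zero, by simp [hz1]⟩
    set S' := S.filter (· ≠ 1) with hS'def
    have hS'ne : S'.Nonempty := by
      have hyS : y ∈ Submonoid.closure (S : Set (G ⧸ U)) := by rw [hSQ]; exact hy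
      obtain ⟨s, hs, hs1⟩ := aux_nontrivial S hyS hy1
      exact ⟨s, Finset.mem_filter.mpr ⟨hs, hs1⟩⟩
    obtain ⟨a, haS', hamin⟩ := aux_min Q hvalQ S' hS'ne
    have haS : a ∈ S := (Finset.mem_filter.mp haS').1
    have ha1 : a ≠ 1 := by
      have := (Finset.mem_filter.mp haS').2
      simpa using this
    have haQ : a ∈ Q := by rw [← hSQ]; exact Submonoid.subset_closure haS
    have hdiv : ∀ q ∈ Q, q = 1 ∨ q * a⁻¹ ∈ Q := by
      refine aux_div Q S hSQ a ?_
      intro s hs hs1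
      exact hamin s (Finset.mem_filter.mpr ⟨hs, hs1⟩)
    have hpow := aux_pow Q S hSQ hvalQ hsharp a haQ ha1 hdiv
    obtain ⟨k, rfl⟩ := hpow y hy
    obtain ⟨l, rfl⟩ := hpow z hz
    have hk : k ≠ 0 := by
      intro h
      exact hy1 (by rw [h, pow_zero])
    refine ⟨(l : ℤ), -(k : ℤ), Or.inr (by simpa using hk), ?_⟩
    rw [zpow_neg, zpow_natCast, zpow_natCast, ← pow_mul, ← pow_mul, Nat.mul_comm]
    simp
  · -- rank at most 1 → valuative
    intro hrel x
    obtain ⟨p, hp, q, hq, rfl⟩ := aux_decomp P hgen x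
    obtain ⟨m, n, hmn, hrel1⟩ := hrel ((QuotientGroup.mk' U) p) ((QuotientGroup.mk' U) q)
    have hu : p ^ m * q ^ n ∈ U := by
      rw [← map_zpow (QuotientGroup.mk' U) p m, ← map_zpow (QuotientGroup.mk' U) q n,
        ← map_mul, QuotientGroup.mk'_apply] at hrel1
      exact (QuotientGroup.eq_one_iff _).mp hrel1
    exact aux_rel P U hU hsat p q hp hq m n hmn hu
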